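/- Let S̄ be an n-slice of the finite group G and p a prime. Then there exists an n-slice K̄ = (K_0,…,K_n) of G such that p does not divide [N_G(K̄):K_0] and m(S̄,T̄) ≡ m(K̄,T̄) (mod p) for every n-slice T̄ of G; moreover K̄ is unique up to conjugacy in G. -/

import Mathlib

variable {G : Type*}

/-- The conjugate slice `ᵍS̄ = (gS₀g⁻¹, …, gSₙg⁻¹)`. -/
def sliceConj [Group G] {n : ℕ} (g : G) (S : Fin (n + 1) → Subgroup G) :
    Fin (n + 1) → Subgroup G :=
  fun i => (S i).map (MulAut.conj g).toMonoidHom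

/-- The mark `m(K̄,S̄) = |{gS₀ ∈ G/S₀ : g⁻¹Kᵢg ≤ Sᵢ for all i}|`. -/
noncomputable def mark [Group G] {n : ℕ} (K S : Fin (n + 1) → Subgroup G) : ℕ :=
  Nat.card {x : G ⧸ S 0 //
    ∃ g : G, QuotientGroup.mk g = x ∧ ∀ i, ∀ k ∈ K i, g⁻¹ * k * g ∈ S i}

/-- The normalizer `N_G(S̄) = ⋂ᵢ N_G(Sᵢ)` of a slice. -/
def sliceNormalizer [Group G] {n : ℕ} (S : Fin (n + 1) → Subgroup G) : Subgroup G :=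
  ⨅ i, Subgroup.normalizer (S i : Set G)

/-- The index `[N_G(S̄) : S₀]`. -/
noncomputable def sliceIndex [Group G] {n : ℕ} (S : Fin (n + 1) → Subgroup G) : ℕ :=
  (S 0).relIndex (sliceNormalizer S)

section Helpers

variable [Group G]

lemma conj_mem_of_mem_normalizer {H : Subgroup G} {g k : G}
    (hg : g ∈ Subgroup.normalizer (H : Set G)) (hk : k ∈ H) : g⁻¹ * k * g ∈ H := by
  have h2 : g⁻¹ ∈ Subgroup.normalizer (H : Set G) := (Subgroup.normalizer (H : Set G)).inv_mem hg
  rw [Subgroup.mem_normalizer_iff] at h2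
  simpa [mul_assoc] using (h2 k).mp hk

lemma mark_step_modEq [Finite G] {n : ℕ} {p : ℕ} (hp : p.Prime)
    (K T : Fin (n + 1) → Subgroup G) (hT : Monotone T) (x : G)
    (hxn : ∀ i, x ∈ Subgroup.normalizer (K i : Set G)) (a : ℕ) (hxp : x ^ p ^ a = 1) :
    mark K T ≡ mark (fun i => K i ⊔ Subgroup.zpowers x) T [MOD p] := by
  classical
  set C := Subgroup.zpowers x with hCdef
  have hCp : IsPGroup p C := by
    rintro ⟨c, m, rfl⟩
    refine ⟨a, ?_⟩
    have key : ((x ^ m) ^ (p ^ a : ℕ) : G) = 1 := by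
      rw [← zpow_natCast (x ^ m) (p ^ a), ← zpow_mul, mul_comm, zpow_mul, zpow_natCast, hxp,
        one_zpow]
    ext
    push_cast
    exact key
  set Y : Set (G ⧸ T 0) :=
    {z | ∃ g : G, QuotientGroup.mk g = z ∧ ∀ i, ∀ k ∈ K i, g⁻¹ * k * g ∈ T i} with hYdef
  have hxC : x ∈ C := Subgroup.mem_zpowers x
  have hstab : ∀ c ∈ C, ∀ z ∈ Y, c • z ∈ Y := by
    intro c hc z hz
    obtain ⟨g, rfl, hg⟩ := hz
    refine ⟨c * g, ?_, ?_⟩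
    · rfl
    · intro i k hk
      have hcn : c ∈ Subgroup.normalizer (K i : Set G) := Subgroup.zpowers_le.mpr (hxn i) hc
      have h1 : c⁻¹ * k * c ∈ K i := conj_mem_of_mem_normalizer hcn hk
      have h2 := hg i _ h1
      simpa [mul_assoc] using h2
  letI : MulAction C ↥Y :=
    { smul := fun c z => ⟨(c : G) • z.1, hstab c c.2 z.1 z.2⟩
      one_smul := fun z => Subtype.ext (one_smul G z.1)
      mul_smul := fun c d z => Subtype.ext (mul_smul (c : G) (d : G) z.1) }
  have hsmul_def : ∀ (c : C) (z : ↥Y), ((c • z : ↥Y) : G ⧸ T 0) = (c : G) • (z : G ⧸ T 0) :=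
    fun c z => rfl
  haveI := Fact.mk hp
  have hmod : Nat.card ↥Y ≡ Nat.card (MulAction.fixedPoints C ↥Y) [MOD p] :=
    hCp.card_modEq_card_fixedPoints ↥Y
  have h1 : mark K T = Nat.card ↥Y := rfl
  have h2 : Nat.card (MulAction.fixedPoints C ↥Y)
      = mark (fun i => K i ⊔ Subgroup.zpowers x) T := by
    apply Nat.card_congr
    refine Equiv.ofBijective (fun z => ⟨(z.1 : G ⧸ T 0), ?_⟩) ⟨?_, ?_⟩
    · -- the property for the bigger slice
      obtain ⟨g, hmk, hg⟩ := z.1.2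
      have hfix := z.2 ⟨x, hxC⟩
      have hx0 : g⁻¹ * x * g ∈ T 0 := by
        have : ((⟨x, hxC⟩ : C) : G) • (z.1 : G ⧸ T 0) = (z.1 : G ⧸ T 0) := by
          rw [← hsmul_def, hfix]
        rw [← hmk] at this
        have h3 : (QuotientGroup.mk (x * g) : G ⧸ T 0) = QuotientGroup.mk g := by
          rw [← this]; rfl
        rw [QuotientGroup.eq] at h3
        have h4 : g⁻¹ * x⁻¹ * g ∈ T 0 := by simpa [mul_assoc] using h3
        have h5 := (T 0).inv_mem h4
        simpa [mul_assoc] using h5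
      refine ⟨g, hmk, ?_⟩
      intro i k hk
      have hle : K i ⊔ Subgroup.zpowers x ≤ (T i).comap (MulAut.conj g⁻¹).toMonoidHom := by
        refine sup_le ?_ ?_
        · intro k' hk'
          simpa [Subgroup.mem_comap, MulAut.conj_apply, mul_assoc] using hg i k' hk'
        · rw [Subgroup.zpowers_le]
          have := hT (Fin.zero_le i) hx0
          simpa [Subgroup.mem_comap, MulAut.conj_apply, mul_assoc] using this
      have := hle hk
      simpa [Subgroup.mem_comap, MulAut.conj_apply, mul_assoc] using this
    · intro z w h
      rw [Subtype.mk.injEq] at h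
      exact Subtype.ext (Subtype.ext h)
    · rintro ⟨z, g, hmk, hg⟩
      have hzY : z ∈ Y := ⟨g, hmk, fun i k hk => hg i k (le_sup_left (α := Subgroup G) hk)⟩
      have hgx : g⁻¹ * x⁻¹ * g ∈ T 0 := by
        have hxK : x⁻¹ ∈ K 0 ⊔ Subgroup.zpowers x :=
          (K 0 ⊔ Subgroup.zpowers x).inv_mem (le_sup_right (α := Subgroup G) hxC)
        exact hg 0 x⁻¹ hxK
      have hfix : ∀ c : C, c • (⟨z, hzY⟩ : ↥Y) = ⟨z, hzY⟩ := by
        have hxs : x ∈ MulAction.stabilizer G z := by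
          rw [MulAction.mem_stabilizer_iff, ← hmk]
          show (QuotientGroup.mk (x * g) : G ⧸ T 0) = QuotientGroup.mk g
          rw [QuotientGroup.eq]
          simpa [mul_assoc] using hgx
        intro c
        refine Subtype.ext ?_
        rw [hsmul_def]
        exact (Subgroup.zpowers_le.mpr hxs) c.2
      exact ⟨⟨⟨z, hzY⟩, hfix⟩, rfl⟩
  rw [h1, ← h2]
  exact hmod

lemma subgroup_eq_of_le_of_card_le [Finite G] {H K : Subgroup G} (h : H ≤ K)
    (hc : Nat.card K ≤ Nat.card H) : H = K := by
  have hs : (H : Set G) = (K : Set G) := by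
    apply Set.eq_of_subset_of_ncard_le h _ (Set.toFinite _)
    rwa [← Nat.card_coe_set_eq, ← Nat.card_coe_set_eq, SetLike.coe_sort_coe,
      SetLike.coe_sort_coe]
  exact SetLike.ext' hs

lemma card_map_conj [Finite G] (H : Subgroup G) (u : G) :
    Nat.card (H.map (MulAut.conj u).toMonoidHom) = Nat.card H :=
  (Nat.card_congr (H.equivMapOfInjective _ (MulAut.conj u).injective).toEquiv).symm

lemma mem_normalizer_of_conj_le [Finite G] {H : Subgroup G} {g : G}
    (h : ∀ k ∈ H, g⁻¹ * k * g ∈ H) : g ∈ Subgroup.normalizer (H : Set G) := by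
  have hle : H.map (MulAut.conj g⁻¹).toMonoidHom ≤ H := by
    rintro _ ⟨k, hk, rfl⟩
    simpa [MulAut.conj_apply, mul_assoc] using h k hk
  have heq : H.map (MulAut.conj g⁻¹).toMonoidHom = H :=
    subgroup_eq_of_le_of_card_le hle (le_of_eq (card_map_conj H g⁻¹).symm)
  rw [Subgroup.mem_normalizer_iff'']
  intro k
  constructor
  · intro hk
    have : (MulAut.conj g⁻¹) k ∈ H.map (MulAut.conj g⁻¹).toMonoidHom :=
      Subgroup.mem_map_of_mem _ hk
    rw [heq] at this
    simpa [MulAut.conj_apply, mul_assoc] using this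
  · intro hk
    have h0 : g⁻¹ * k * g ∈ H.map (MulAut.conj g⁻¹).toMonoidHom := heq.symm ▸ hk
    obtain ⟨k', hk', hkk⟩ := h0
    have h1 : g⁻¹ * k' * g = g⁻¹ * k * g := by
      simpa [MulAut.conj_apply, mul_assoc] using hkk
    have h2 : k' = k := mul_left_cancel (mul_right_cancel h1)
    rwa [← h2]

lemma slice_K0_le_normalizer {n : ℕ} (K : Fin (n + 1) → Subgroup G) (hK : Monotone K) :
    K 0 ≤ sliceNormalizer K :=
  le_iInf fun i => (hK (Fin.zero_le i)).trans (Subgroup.le_normalizer)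

lemma mark_self_eq [Finite G] {n : ℕ} (K : Fin (n + 1) → Subgroup G) (hK : Monotone K) :
    mark K K = sliceIndex K := by
  classical
  set N := sliceNormalizer K with hN
  have hK0N : K 0 ≤ N := slice_K0_le_normalizer K hK
  have hNi : ∀ i, N ≤ Subgroup.normalizer (K i : Set G) := fun i => iInf_le _ i
  -- the map from the quotient to the mark subtype
  set P : G ⧸ K 0 → Prop :=
    fun z => ∃ g : G, QuotientGroup.mk g = z ∧ ∀ i, ∀ k ∈ K i, g⁻¹ * k * g ∈ K i with hP
  have hval : ∀ u : N, P (QuotientGroup.mk (u : G)) := by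
    intro u
    exact ⟨u, rfl, fun i k hk => conj_mem_of_mem_normalizer (hNi i u.2) hk⟩
  set e : (N ⧸ (K 0).subgroupOf N) → {z // P z} :=
    fun q => Quotient.liftOn' q (fun u => (⟨QuotientGroup.mk (u : G), hval u⟩ : {z // P z}))
      (by
        intro u v huv
        rw [QuotientGroup.leftRel_apply] at huv
        refine Subtype.ext ?_
        rw [QuotientGroup.eq]
        simpa [Subgroup.mem_subgroupOf] using huv) with he
  have hbij : Function.Bijective e := by
    constructor
    · intro q1 q2 h
      induction q1 using Quotient.inductionOn'
      induction q2 using Quotient.inductionOn'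
      rename_i u v
      have h2 : (QuotientGroup.mk (u : G) : G ⧸ K 0) = QuotientGroup.mk (v : G) :=
        congrArg Subtype.val h
      rw [QuotientGroup.eq] at h2
      apply Quotient.sound'
      rw [QuotientGroup.leftRel_apply]
      simpa [Subgroup.mem_subgroupOf] using h2
    · rintro ⟨z, g, hmk, hg⟩
      have hgN : g ∈ N := by
        rw [hN, sliceNormalizer, Subgroup.mem_iInf]
        exact fun i => mem_normalizer_of_conj_le (hg i)
      refine ⟨QuotientGroup.mk (⟨g, hgN⟩ : N), Subtype.ext ?_⟩
      exact hmk
  have h1 : mark K K = Nat.card {z // P z} := rfl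
  rw [h1, ← Nat.card_congr (Equiv.ofBijective e hbij)]
  show Nat.card (N ⧸ (K 0).subgroupOf N) = sliceIndex K
  rw [sliceIndex, Subgroup.relIndex, Subgroup.index_eq_card]

lemma mark_ne_zero_exists [Finite G] {n : ℕ} (K' K : Fin (n + 1) → Subgroup G)
    (h : mark K' K ≠ 0) : ∃ g : G, ∀ i, ∀ k ∈ K' i, g⁻¹ * k * g ∈ K i := by
  rw [mark] at h
  have h2 : Nonempty {z : G ⧸ K 0 //
      ∃ g : G, QuotientGroup.mk g = z ∧ ∀ i, ∀ k ∈ K' i, g⁻¹ * k * g ∈ K i} := by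
    by_contra hne
    rw [not_nonempty_iff] at hne
    exact h (Nat.card_eq_zero.mpr (Or.inl hne))
  obtain ⟨⟨z, g, hmk, hg⟩⟩ := h2
  exact ⟨g, hg⟩

lemma conj_of_compatible [Finite G] {n : ℕ} (K K' : Fin (n + 1) → Subgroup G)
    {g h : G} (hg : ∀ i, ∀ k ∈ K' i, g⁻¹ * k * g ∈ K i)
    (hh : ∀ i, ∀ k ∈ K i, h⁻¹ * k * h ∈ K' i) :
    sliceConj g K = K' := by
  funext i
  have hcard1 : Nat.card (K' i) ≤ Nat.card (K i) := by
    apply Nat.card_le_card_of_injective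
      (fun k : K' i => (⟨g⁻¹ * (k : G) * g, hg i k k.2⟩ : K i))
    intro a b hab
    have h2 : g⁻¹ * (a : G) * g = g⁻¹ * (b : G) * g := congrArg Subtype.val hab
    exact Subtype.ext (mul_left_cancel (mul_right_cancel h2))
  have hcard2 : Nat.card (K i) ≤ Nat.card (K' i) := by
    apply Nat.card_le_card_of_injective
      (fun k : K i => (⟨h⁻¹ * (k : G) * h, hh i k k.2⟩ : K' i))
    intro a b hab
    have h2 : h⁻¹ * (a : G) * h = h⁻¹ * (b : G) * h := congrArg Subtype.val hab
    exact Subtype.ext (mul_left_cancel (mul_right_cancel h2))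
  have hle : K' i ≤ (K i).map (MulAut.conj g).toMonoidHom := by
    intro k hk
    refine ⟨g⁻¹ * k * g, hg i k hk, ?_⟩
    simp [MulAut.conj_apply, mul_assoc]
  have : (K i).map (MulAut.conj g).toMonoidHom = K' i := by
    refine (subgroup_eq_of_le_of_card_le hle ?_).symm
    rw [card_map_conj]
    exact le_antisymm hcard1 hcard2 ▸ le_refl _
  exact this

lemma exists_step [Finite G] {n : ℕ} {p : ℕ} (hp : p.Prime)
    (K : Fin (n + 1) → Subgroup G) (hK : Monotone K) (hdvd : p ∣ sliceIndex K) :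
    ∃ x : G, x ∉ K 0 ∧ (∀ i, x ∈ Subgroup.normalizer (K i : Set G)) ∧ ∃ a : ℕ, x ^ p ^ a = 1 := by
  classical
  set N := sliceNormalizer K with hN
  have hNi : ∀ i, N ≤ Subgroup.normalizer (K i : Set G) := fun i => iInf_le _ i
  haveI hnorm : ((K 0).subgroupOf N).Normal := by
    constructor
    rintro ⟨u, huN⟩ hu ⟨v, hvN⟩
    rw [Subgroup.mem_subgroupOf] at hu ⊢
    have := (Subgroup.mem_normalizer_iff.mp (hNi 0 hvN) u).mp hu
    simpa using this
  have hdvd' : p ∣ Nat.card (N ⧸ (K 0).subgroupOf N) := by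
    rwa [sliceIndex, Subgroup.relIndex, Subgroup.index_eq_card] at hdvd
  haveI := Fact.mk hp
  obtain ⟨q, hq⟩ := exists_prime_orderOf_dvd_card' (G := N ⧸ (K 0).subgroupOf N) p hdvd'
  obtain ⟨y, hy⟩ := QuotientGroup.mk_surjective q
  set t := orderOf y with ht
  have ht0 : t ≠ 0 := (orderOf_pos y).ne'
  have hpt : p ∣ t := by
    rw [← hq, ← hy]
    exact orderOf_map_dvd (QuotientGroup.mk' ((K 0).subgroupOf N)) y
  set a := t.factorization p with ha
  set m := ordCompl[p] t with hm
  have hmt : p ^ a * m = t := Nat.ordProj_mul_ordCompl_eq_self t p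
  set x' : N := y ^ m with hx'
  have hx'pow : x' ^ p ^ a = 1 := by
    rw [hx', ← pow_mul, mul_comm, hmt, pow_orderOf_eq_one]
  have hmkx' : QuotientGroup.mk x' = q ^ m := by
    rw [hx', ← hy]
    rfl
  have hq1 : (q : N ⧸ (K 0).subgroupOf N) ^ m ≠ 1 := by
    intro hone
    have : orderOf q ∣ m := orderOf_dvd_of_pow_eq_one hone
    rw [hq] at this
    exact Nat.not_dvd_ordCompl hp ht0 this
  have hx'notin : x' ∉ (K 0).subgroupOf N := by
    intro hmem
    exact hq1 (hmkx' ▸ (QuotientGroup.eq_one_iff x').mpr hmem)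
  refine ⟨(x' : G), ?_, ?_, a, ?_⟩
  · intro hmem
    exact hx'notin (Subgroup.mem_subgroupOf.mpr hmem)
  · exact fun i => hNi i x'.2
  · have := congrArg (Subtype.val : N → G) hx'pow
    push_cast at this
    exact this

lemma exists_reduce [Finite G] {n : ℕ} {p : ℕ} (hp : p.Prime) :
    ∀ (m : ℕ) (K : Fin (n + 1) → Subgroup G), Monotone K →
      Nat.card G ≤ Nat.card (K 0) + m →
      ∃ K' : Fin (n + 1) → Subgroup G, Monotone K' ∧ ¬ p ∣ sliceIndex K' ∧
        ∀ T : Fin (n + 1) → Subgroup G, Monotone T → mark K T ≡ mark K' T [MOD p] := by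
  intro m
  induction m with
  | zero =>
    intro K hK hcard
    by_cases hdvd : p ∣ sliceIndex K
    · exfalso
      obtain ⟨x, hx0, hxn, a, hxp⟩ := exists_step hp K hK hdvd
      have htop : K 0 = ⊤ := by
        apply subgroup_eq_of_le_of_card_le le_top
        rw [Subgroup.card_top]
        omega
      rw [htop] at hx0
      exact hx0 (Subgroup.mem_top x)
    · exact ⟨K, hK, hdvd, fun T _ => Nat.ModEq.refl _⟩
  | succ m ih =>
    intro K hK hcard
    by_cases hdvd : p ∣ sliceIndex K
    · obtain ⟨x, hx0, hxn, a, hxp⟩ := exists_step hp K hK hdvd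
      set K'' : Fin (n + 1) → Subgroup G := fun i => K i ⊔ Subgroup.zpowers x with hK''
      have hK''mono : Monotone K'' := fun i j hij => sup_le_sup_right (hK hij) _
      have hlt : K 0 < K'' 0 := by
        refine lt_of_le_of_ne le_sup_left ?_
        intro heq
        exact hx0 (heq ▸ le_sup_right (α := Subgroup G) (Subgroup.mem_zpowers x))
      have hcardlt : Nat.card (K 0) < Nat.card (K'' 0) := by
        have hsub : (K 0 : Set G) ⊂ (K'' 0 : Set G) := by
          rw [Set.ssubset_iff_of_subset (SetLike.coe_subset_coe.mpr hlt.le)]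
          obtain ⟨y, hy1, hy2⟩ := SetLike.exists_of_lt hlt
          exact ⟨y, hy1, hy2⟩
        have := Set.ncard_lt_ncard hsub (Set.toFinite _)
        rwa [← Nat.card_coe_set_eq, ← Nat.card_coe_set_eq, SetLike.coe_sort_coe,
          SetLike.coe_sort_coe] at this
      obtain ⟨K', hK'mono, hK'dvd, hK'mark⟩ := ih K'' hK''mono (by omega)
      refine ⟨K', hK'mono, hK'dvd, fun T hT => ?_⟩
      exact (mark_step_modEq hp K T hT x hxn a hxp).trans (hK'mark T hT)
    · exact ⟨K, hK, hdvd, fun T _ => Nat.ModEq.refl _⟩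

end Helpers

/-- for a slice `S̄` and a prime `p` there is an `n`-slice `K̄`,
unique up to conjugacy, with `p ∤ [N_G(K̄):K₀]` and
`m(S̄,T̄) ≡ m(K̄,T̄) (mod p)` for every `n`-slice `T̄`. -/
theorem exists_p_closure_slice {n : ℕ} [Group G] [Finite G]
    (p : ℕ) (hp : p.Prime)
    (S : Fin (n + 1) → Subgroup G) (hS : Monotone S) :
    ∃ K : Fin (n + 1) → Subgroup G, Monotone K ∧
      ¬(p ∣ sliceIndex K) ∧
      (∀ T : Fin (n + 1) → Subgroup G, Monotone T → mark S T ≡ mark K T [MOD p]) ∧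
      ∀ K' : Fin (n + 1) → Subgroup G, Monotone K' →
        ¬(p ∣ sliceIndex K') →
        (∀ T : Fin (n + 1) → Subgroup G, Monotone T → mark S T ≡ mark K' T [MOD p]) →
        ∃ g : G, sliceConj g K = K' := by
  obtain ⟨K, hKmono, hKdvd, hKmark⟩ :=
    exists_reduce hp (Nat.card G) S hS (by omega)
  refine ⟨K, hKmono, hKdvd, hKmark, ?_⟩
  intro K' hK'mono hK'dvd hK'mark
  have hmarks : ∀ T : Fin (n + 1) → Subgroup G, Monotone T →
      mark K T ≡ mark K' T [MOD p] :=
    fun T hT => (hKmark T hT).symm.trans (hK'mark T hT)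
  -- mark K' K is nonzero
  have h1 : mark K' K ≠ 0 := by
    intro h0
    apply hKdvd
    have := (hmarks K hKmono).symm
    rw [h0, mark_self_eq K hKmono] at this
    exact (Nat.modEq_zero_iff_dvd).mp this.symm
  have h2 : mark K K' ≠ 0 := by
    intro h0
    apply hK'dvd
    have := hmarks K' hK'mono
    rw [h0, mark_self_eq K' hK'mono] at this
    exact (Nat.modEq_zero_iff_dvd).mp this.symm
  obtain ⟨g, hg⟩ := mark_ne_zero_exists K' K h1
  obtain ⟨h, hh⟩ := mark_ne_zero_exists K K' h2
  exact ⟨g, conj_of_compatible K K' hg hh⟩
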